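/- For every a ∈ ℤ with 1 ≤ |a| ≤ b and every j ∈ {1,…,n}, if x ≠ aΔ·e_j (where e_j is the j-th standard basis vector of ℝⁿ), then P( V x = aΔ·v_j ) ≤ 2·exp(−P₂/24). -/

import Mathlib

open MeasureTheory ProbabilityTheory Real

lemma aux_iIndepFun_ae_eq {Ω ι : Type*} {mΩ : MeasurableSpace Ω} {μ : Measure Ω}
    {β : ι → Type*} [m : ∀ i, MeasurableSpace (β i)] {f g : ∀ i, Ω → β i}
    (hf : iIndepFun f μ) (hfg : ∀ i, f i =ᵐ[μ] g i) :
    iIndepFun g μ := by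
  classical
  rw [iIndepFun_iff] at hf ⊢
  intro s f' H
  have key : ∀ i, ∃ B : Set Ω, MeasurableSet[(m i).comap (f i)] B ∧ (i ∈ s → B =ᵐ[μ] f' i) := by
    intro i
    by_cases hi : i ∈ s
    · obtain ⟨A, hA, hpre⟩ := H i hi
      refine ⟨f i ⁻¹' A, ⟨A, hA, rfl⟩, fun _ => ?_⟩
      rw [← hpre]
      filter_upwards [hfg i] with ω hω
      exact congrArg (· ∈ A) hω
    · exact ⟨∅, @MeasurableSet.empty _ ((m i).comap (f i)), fun hm => absurd hm hi⟩
  choose B hB hBe using key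
  have h1 : (⋂ i ∈ s, f' i) =ᵐ[μ] (⋂ i ∈ s, B i) :=
    EventuallyEq.countable_bInter s.countable_toSet (fun i hi => (hBe i hi).symm)
  rw [measure_congr h1, hf s (fun i _ => hB i)]
  exact Finset.prod_congr rfl fun i hi => measure_congr (hBe i hi)


/-- Let `V` be a `P₂ × n` matrix with i.i.d. Rademacher entries, `h ∈ {0,1}ⁿ`,
`β` a vector with all coordinates in `𝔻 = {kΔ : 1 ≤ |k| ≤ b}`, and `x = diag(h)β`. For any
`a ∈ ℤ` with `1 ≤ |a| ≤ b` and any coordinate `j`, if `x ≠ aΔ·e_j` then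
`P(Vx = aΔ·v_j) ≤ 2·exp(−P₂/24)`, where `v_j` is the `j`-th column of `V`. -/
theorem singleton_verification
    {Ω : Type} [MeasurableSpace Ω] (P : Measure Ω) [IsProbabilityMeasure P]
    (Δ : ℝ) (b : ℕ) (hΔ : 0 < Δ) (hb : 0 < b)
    (P₂ n : ℕ) (V : Fin P₂ → Fin n → Ω → ℝ)
    (hindep : iIndepFun
      (fun p : Fin P₂ × Fin n => V p.1 p.2) P)
    (hdist : ∀ i j, Measure.map (V i j) P =
      (1/2 : ENNReal) • Measure.dirac (1 : ℝ) + (1/2 : ENNReal) • Measure.dirac (-1 : ℝ))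
    (h : Fin n → ℝ) (hh : ∀ j, h j = 0 ∨ h j = 1)
    (β : Fin n → ℝ) (hβ : ∀ j, ∃ k : ℤ, 1 ≤ |k| ∧ |k| ≤ (b : ℤ) ∧ β j = (k : ℝ) * Δ)
    (a : ℤ) (ha : 1 ≤ |a| ∧ |a| ≤ (b : ℤ)) (j₀ : Fin n)
    (hx : (fun j => h j * β j) ≠ (fun j => if j = j₀ then (a : ℝ) * Δ else 0)) :
    P {ω | ∀ i : Fin P₂, ∑ j, V i j ω * (h j * β j) = (a : ℝ) * Δ * V i j₀ ω}
      ≤ ENNReal.ofReal (2 * Real.exp (-(P₂ : ℝ) / 24)) := by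
  classical
  set ρ : Measure ℝ :=
    (1/2 : ENNReal) • Measure.dirac (1:ℝ) + (1/2 : ENNReal) • Measure.dirac (-1:ℝ) with hρ
  have hρ_prob : IsProbabilityMeasure ρ := by
    constructor
    simp only [hρ, Measure.coe_add, Measure.coe_smul, Pi.add_apply, Pi.smul_apply,
      measure_univ, smul_eq_mul, mul_one]
    rw [one_div]
    exact ENNReal.inv_two_add_inv_two
  have hρ_single : ∀ y : ℝ, ρ {y} ≤ 1/2 := by
    intro y
    by_cases hy : y = 1
    · subst hy
      simp [hρ, Measure.dirac_apply']
      norm_num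
    · by_cases hy' : y = -1
      · subst hy'
        simp [hρ, Measure.dirac_apply']
        norm_num
      · have h1 : (1:ℝ) ≠ y := fun hh1 => hy hh1.symm
        have h2 : (-1:ℝ) ≠ y := fun hh2 => hy' hh2.symm
        simp [hρ, Measure.dirac_apply', Set.indicator, h1, h2]
  have haem : ∀ p : Fin P₂ × Fin n, AEMeasurable (V p.1 p.2) P := by
    intro p
    by_contra hcon
    have h0 := Measure.map_of_not_aemeasurable hcon
    rw [hdist p.1 p.2] at h0
    have : ρ Set.univ = 0 := by rw [h0]; rfl
    rw [measure_univ] at this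
    exact one_ne_zero this
  set W : Fin P₂ × Fin n → Ω → ℝ := fun p => (haem p).mk _ with hWdef
  have hWmeas : ∀ p, Measurable (W p) := fun p => (haem p).measurable_mk
  have hWae : ∀ p : Fin P₂ × Fin n, V p.1 p.2 =ᵐ[P] W p := fun p => (haem p).ae_eq_mk
  have hWindep : iIndepFun W P := aux_iIndepFun_ae_eq hindep hWae
  have hWdist : ∀ p : Fin P₂ × Fin n, Measure.map (W p) P = ρ := by
    intro p
    rw [← Measure.map_congr (hWae p)]
    exact hdist p.1 p.2
  set c : Fin n → ℝ := fun j => h j * β j - (if j = j₀ then (a:ℝ) * Δ else 0) with hc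
  obtain ⟨js, hjs⟩ : ∃ j, c j ≠ 0 := by
    by_contra hcon
    push_neg at hcon
    apply hx
    funext j
    have := hcon j
    rw [hc] at this
    simpa [sub_eq_zero] using this
  set E : Fin P₂ → Set Ω := fun i => {ω | ∑ j, W (i, j) ω * c j = 0} with hE
  -- rewrite target measure
  have hsplit : ∀ i (ω : Ω), ∑ j, W (i, j) ω * c j
      = (∑ j, W (i, j) ω * (h j * β j)) - (a:ℝ) * Δ * W (i, j₀) ω := by
    intro i ω
    rw [hc]
    simp only [mul_sub]
    rw [Finset.sum_sub_distrib]
    congr 1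
    simp only [mul_ite, mul_zero]
    rw [Finset.sum_ite_eq' Finset.univ j₀ (fun j => W (i, j) ω * ((a:ℝ) * Δ))]
    simp only [Finset.mem_univ, if_true]
    ring
  have hset : P {ω | ∀ i : Fin P₂, ∑ j, V i j ω * (h j * β j) = (a : ℝ) * Δ * V i j₀ ω}
      = P (⋂ i, E i) := by
    apply measure_congr
    have hall : ∀ᵐ ω ∂P, ∀ p : Fin P₂ × Fin n, V p.1 p.2 ω = W p ω :=
      (ae_all_iff).2 (fun p => hWae p)
    filter_upwards [hall] with ω hω
    have : (∀ i : Fin P₂, ∑ j, V i j ω * (h j * β j) = (a : ℝ) * Δ * V i j₀ ω)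
        ↔ ∀ i : Fin P₂, ω ∈ E i := by
      refine forall_congr' fun i => ?_
      have hrw : ∀ j, V i j ω = W (i, j) ω := fun j => hω (i, j)
      simp only [hE, Set.mem_setOf_eq, hsplit i ω, sub_eq_zero]
      simp only [hrw]
    exact propext (this.trans Set.mem_iInter.symm)
  -- sigma algebras
  set m' : Fin P₂ × Fin n → MeasurableSpace Ω :=
    fun p => MeasurableSpace.comap (W p) inferInstance with hm'
  have hm'le : ∀ p, m' p ≤ ‹MeasurableSpace Ω› := fun p => (hWmeas p).comap_le
  have hiIndep : iIndep m' P := (iIndepFun_iff_iIndep _ _ _).1 hWindep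
  have hWsup : ∀ (R : Set (Fin P₂ × Fin n)) (p : Fin P₂ × Fin n), p ∈ R →
      Measurable[⨆ q ∈ R, m' q] (W p) := by
    intro R p hp
    apply Measurable.of_comap_le
    exact le_iSup₂ (f := fun q _ => m' q) p hp
  have hEmeas : ∀ (R : Set (Fin P₂ × Fin n)) (i : Fin P₂), (∀ j, (i, j) ∈ R) →
      MeasurableSet[⨆ q ∈ R, m' q] (E i) := by
    intro R i hR
    have hsum : Measurable[⨆ q ∈ R, m' q] (fun ω => ∑ j, W (i, j) ω * c j) := by
      apply Finset.measurable_sum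
      intro j _
      exact (hWsup R (i, j) (hR j)).mul_const _
    exact hsum (measurableSet_singleton 0)
  -- product over rows
  have hprod : ∀ s : Finset (Fin P₂), P (⋂ i ∈ s, E i) = ∏ i ∈ s, P (E i) := by
    intro s
    induction s using Finset.induction_on with
    | empty => simp
    | @insert i₀ s hi₀ ih =>
      have hdisj : Disjoint {q : Fin P₂ × Fin n | q.1 = i₀} {q : Fin P₂ × Fin n | q.1 ∈ s} := by
        rw [Set.disjoint_left]
        rintro q hq1 hq2
        simp only [Set.mem_setOf_eq] at hq1 hq2
        rw [hq1] at hq2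
        exact hi₀ hq2
      have hind := indep_iSup_of_disjoint hm'le hiIndep hdisj
      have h1 : MeasurableSet[⨆ q ∈ {q : Fin P₂ × Fin n | q.1 = i₀}, m' q] (E i₀) :=
        hEmeas _ i₀ (fun j => rfl)
      have h2 : MeasurableSet[⨆ q ∈ {q : Fin P₂ × Fin n | q.1 ∈ s}, m' q] (⋂ i ∈ s, E i) := by
        apply MeasurableSet.biInter s.countable_toSet
        intro i hi
        exact hEmeas _ i (fun j => hi)
      rw [Finset.set_biInter_insert, (Indep_iff _ _ _).1 hind _ _ h1 h2, ih,
        Finset.prod_insert hi₀]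
  -- per-row bound
  have hrow : ∀ i : Fin P₂, P (E i) ≤ 1/2 := by
    intro i
    set T : Ω → ℝ := W (i, js) with hT
    set Sf : Ω → ℝ := fun ω => ∑ j ∈ Finset.univ.erase js, W (i, j) ω * c j with hSf
    have hSfmeas : Measurable Sf :=
      Finset.measurable_sum _ (fun j _ => (hWmeas _).mul_const _)
    have hindepST : IndepFun Sf T P := by
      have hdisj : Disjoint {q : Fin P₂ × Fin n | q.1 = i ∧ q.2 ≠ js}
          {q : Fin P₂ × Fin n | q = (i, js)} := by
        rw [Set.disjoint_left]
        rintro q ⟨hq1, hq2⟩ hq3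
        simp only [Set.mem_setOf_eq] at hq3
        rw [hq3] at hq2
        exact hq2 rfl
      have hind := indep_iSup_of_disjoint hm'le hiIndep hdisj
      rw [IndepFun_iff]
      intro t1 t2 ht1 ht2
      have hle1 : MeasurableSpace.comap Sf inferInstance
          ≤ ⨆ q ∈ {q : Fin P₂ × Fin n | q.1 = i ∧ q.2 ≠ js}, m' q := by
        apply Measurable.comap_le
        apply Finset.measurable_sum
        intro j hj
        have hmem : ((i, j) : Fin P₂ × Fin n) ∈ {q : Fin P₂ × Fin n | q.1 = i ∧ q.2 ≠ js} :=
          ⟨rfl, Finset.ne_of_mem_erase hj⟩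
        exact (hWsup _ (i, j) hmem).mul_const _
      have hle2 : MeasurableSpace.comap T inferInstance
          ≤ ⨆ q ∈ {q : Fin P₂ × Fin n | q = (i, js)}, m' q :=
        Measurable.comap_le (hWsup _ (i, js) rfl)
      exact (Indep_iff _ _ _).1 hind t1 t2 (hle1 t1 ht1) (hle2 t2 ht2)
    have hmap : Measure.map (fun ω => (Sf ω, T ω)) P
        = (Measure.map Sf P).prod (Measure.map T P) :=
      (indepFun_iff_map_prod_eq_prod_map_map hSfmeas.aemeasurable
        (hWmeas _).aemeasurable).1 hindepST
    have hTmap : Measure.map T P = ρ := hWdist (i, js)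
    have hSprob : IsProbabilityMeasure (Measure.map Sf P) :=
      Measure.isProbabilityMeasure_map hSfmeas.aemeasurable
    have hmeasset : MeasurableSet {q : ℝ × ℝ | q.1 + q.2 * c js = 0} := by
      have hmf : Measurable (fun q : ℝ × ℝ => q.1 + q.2 * c js) := by fun_prop
      exact hmf (measurableSet_singleton 0)
    have hEeq : E i = (fun ω => (Sf ω, T ω)) ⁻¹' {q : ℝ × ℝ | q.1 + q.2 * c js = 0} := by
      ext ω
      simp only [hE, Set.mem_setOf_eq, Set.mem_preimage]
      rw [hSf, hT]
      constructor
      · intro h0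
        rw [← Finset.add_sum_erase Finset.univ _ (Finset.mem_univ js)] at h0
        linarith [h0]
      · intro h0
        rw [← Finset.add_sum_erase Finset.univ (fun j => W (i, j) ω * c j) (Finset.mem_univ js)]
        linarith [h0]
    calc P (E i) = Measure.map (fun ω => (Sf ω, T ω)) P {q : ℝ × ℝ | q.1 + q.2 * c js = 0} := by
          rw [hEeq, Measure.map_apply (hSfmeas.prodMk (hWmeas _)) hmeasset]
      _ = (Measure.map Sf P).prod ρ {q : ℝ × ℝ | q.1 + q.2 * c js = 0} := by rw [hmap, hTmap]
      _ = ∫⁻ x, ρ (Prod.mk x ⁻¹' {q : ℝ × ℝ | q.1 + q.2 * c js = 0}) ∂(Measure.map Sf P) :=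
          Measure.prod_apply hmeasset
      _ ≤ ∫⁻ _, 1/2 ∂(Measure.map Sf P) := by
          apply lintegral_mono
          intro x
          show ρ (Prod.mk x ⁻¹' {q : ℝ × ℝ | q.1 + q.2 * c js = 0}) ≤ 1/2
          have : Prod.mk x ⁻¹' {q : ℝ × ℝ | q.1 + q.2 * c js = 0} = {(-x) / c js} := by
            ext t
            simp only [Set.mem_preimage, Set.mem_setOf_eq, Set.mem_singleton_iff]
            rw [eq_div_iff hjs]
            constructor
            · intro h0; linarith
            · intro h0; linarith
          rw [this]
          exact hρ_single _
      _ = 1/2 := by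
          rw [lintegral_const, measure_univ, mul_one]
  -- combine
  have hbound : P (⋂ i, E i) ≤ (1/2 : ENNReal) ^ P₂ := by
    have h0 : (⋂ i, E i) = ⋂ i ∈ Finset.univ, E i := by simp
    rw [h0, hprod Finset.univ]
    calc ∏ i : Fin P₂, P (E i) ≤ ∏ _i : Fin P₂, (1/2 : ENNReal) :=
          Finset.prod_le_prod' (fun i _ => hrow i)
      _ = (1/2 : ENNReal) ^ P₂ := by simp [Finset.prod_const]
  rw [hset]
  refine hbound.trans ?_
  have hreal : ((1:ℝ)/2) ^ P₂ ≤ 2 * Real.exp (-(P₂ : ℝ) / 24) := by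
    have h12 : ((1:ℝ)/2) ≤ Real.exp (-(1:ℝ)/24) := by
      have := Real.add_one_le_exp (-(1:ℝ)/24)
      linarith
    have h2 : ((1:ℝ)/2) ^ P₂ ≤ (Real.exp (-(1:ℝ)/24)) ^ P₂ :=
      pow_le_pow_left₀ (by norm_num) h12 P₂
    have h3 : (Real.exp (-(1:ℝ)/24)) ^ P₂ = Real.exp (-(P₂ : ℝ) / 24) := by
      rw [← Real.exp_nat_mul]
      ring_nf
    rw [h3] at h2
    nlinarith [Real.exp_pos (-(P₂ : ℝ) / 24)]
  calc (1/2 : ENNReal) ^ P₂ = ENNReal.ofReal (((1:ℝ)/2) ^ P₂) := by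
        rw [ENNReal.ofReal_pow (by norm_num)]
        norm_num [ENNReal.ofReal_div_of_pos]
    _ ≤ ENNReal.ofReal (2 * Real.exp (-(P₂ : ℝ) / 24)) := ENNReal.ofReal_le_ofReal hreal
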